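/- In the Bradley-Terry model with all strengths π_i > 0, if π_i > π_j then the round-robin winning percentage satisfies R_i > R_j, where R_i = (1/(t-1)) Σ_{k≠i} π_i/(π_i+π_k). -/
import Mathlib


theorem bt_rrwp_order {T : Type*} [Fintype T] [DecidableEq T]
    (ht : 2 ≤ Fintype.card T)
    (π : T → ℝ) (hπ : ∀ i : T, 0 < π i)
    (i j : T) (hij : i ≠ j) (hstr : π i > π j) :
    (1 / (Fintype.card T - 1 : ℝ)) * ∑ k ∈ Finset.univ.erase i, π i / (π i + π k) >
    (1 / (Fintype.card T - 1 : ℝ)) * ∑ k ∈ Finset.univ.erase j, π j / (π j + π k) := by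
  have hc : (0:ℝ) < 1 / (Fintype.card T - 1 : ℝ) := by
    have : (2:ℝ) ≤ (Fintype.card T : ℝ) := by exact_mod_cast ht
    have : (0:ℝ) < (Fintype.card T : ℝ) - 1 := by linarith
    positivity
  apply mul_lt_mul_of_pos_left _ hc
  set A : Finset T := Finset.univ \ {i, j} with hA
  have hiA : i ∉ A := by simp [hA]
  have hjA : j ∉ A := by simp [hA]
  have hei : Finset.univ.erase i = insert j A := by
    ext k; by_cases hk : k = j <;> simp [hA, hk, hij.symm, Finset.mem_erase]
  have hej : Finset.univ.erase j = insert i A := by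
    ext k; by_cases hk : k = i <;> simp [hA, hk, hij, Finset.mem_erase]
  rw [hei, hej, Finset.sum_insert hjA, Finset.sum_insert hiA]
  apply add_lt_add_of_lt_of_le
  · have hi := hπ i
    have hj := hπ j
    rw [div_lt_div_iff₀ (by positivity) (by positivity)]
    nlinarith
  · apply Finset.sum_le_sum
    intro k _
    have hk := hπ k
    have hi := hπ i
    have hj := hπ j
    rw [div_le_div_iff₀ (by positivity) (by positivity)]
    nlinarith
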